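/- Let G = C_{2k+1} be an odd cycle (k ≥ 1) and H = (L,H) an arbitrary m-fold cover of G with m ≥ 2. Then for each edge uv of G and every non-adjacent pair p_1 ∈ L(u), p_2 ∈ L(v) (p_1p_2 ∉ E(H)), the number of H-colorings containing {p_1,p_2} is at least P_DP(C_{2k+1},m)/(m(m-1)). -/

import Mathlib

open SimpleGraph Finset



/-- An `m`-fold cover of a graph `G`, with lists canonically labeled by `Fin m`. -/
structure DPCover {V : Type} (G : SimpleGraph V) (m : ℕ) where
  H : SimpleGraph (V × Fin m)
  part_complete : ∀ (v : V) (a b : Fin m), a ≠ b → H.Adj (v, a) (v, b)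
  cross : ∀ (u v : V) (a b : Fin m), u ≠ v → H.Adj (u, a) (v, b) → G.Adj u v
  matching_right : ∀ (u v : V) (a b b' : Fin m), u ≠ v →
    H.Adj (u, a) (v, b) → H.Adj (u, a) (v, b') → b = b'
  matching_left : ∀ (u v : V) (a a' b : Fin m), u ≠ v →
    H.Adj (u, a) (v, b) → H.Adj (u, a') (v, b) → a = a'

/-- A cover is full if every matching between lists of adjacent vertices is perfect. -/
def DPCover.IsFull {V : Type} {G : SimpleGraph V} {m : ℕ} (C : DPCover G m) : Prop :=
  ∀ u v : V, G.Adj u v → ∀ a : Fin m, ∃ b : Fin m, C.H.Adj (u, a) (v, b)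

/-- An `H`-coloring: a choice of one list element per vertex forming an independent set. -/
def DPCover.IsColoring {V : Type} {G : SimpleGraph V} {m : ℕ} (C : DPCover G m)
    (c : V → Fin m) : Prop :=
  ∀ u v : V, ¬ C.H.Adj (u, c u) (v, c v)

/-- The number of `H`-colorings of `G` with respect to the cover `C`. -/
noncomputable def dpCount {V : Type} {G : SimpleGraph V} {m : ℕ} (C : DPCover G m) : ℕ :=
  Nat.card {c : V → Fin m // C.IsColoring c}

/-- `N(P, C)`: the number of `H`-colorings containing the set `P` of cover vertices. -/
noncomputable def NCount {V : Type} {G : SimpleGraph V} {m : ℕ} (C : DPCover G m)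
    (P : Set (V × Fin m)) : ℕ :=
  Nat.card {c : V → Fin m // C.IsColoring c ∧ ∀ p ∈ P, c p.1 = p.2}

/-- The DP color function: minimum number of colorings over all `m`-fold covers. -/
noncomputable def PDP {V : Type} (G : SimpleGraph V) (m : ℕ) : ℕ :=
  sInf {n : ℕ | ∃ C : DPCover G m, dpCount C = n}

/-- The number of proper `m`-colorings (the chromatic polynomial evaluated at `m`). -/
noncomputable def properCount {V : Type} (G : SimpleGraph V) (m : ℕ) : ℕ :=
  Nat.card {c : V → Fin m // ∀ u v : V, G.Adj u v → c u ≠ c v}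

/-- A cover has a canonical labeling if lists can be renamed so all cross edges are
`(u,j)(v,j)`. -/
def DPCover.HasCanonicalLabeling {V : Type} {G : SimpleGraph V} {m : ℕ}
    (C : DPCover G m) : Prop :=
  ∃ σ : V → Equiv.Perm (Fin m), ∀ u v : V, G.Adj u v → ∀ j : Fin m,
    C.H.Adj (u, σ u j) (v, σ v j)


namespace DPProof

def te (m : ℕ) : ℕ → ℕ × ℕ
  | 0 => (0, 1)
  | n+1 => ((te m n).2 + (m-2) * (te m n).1, (m-1) * (te m n).1)

lemma te_parity {m : ℕ} (hm : 2 ≤ m) (n : ℕ) :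
    (Even n → (te m n).1 ≤ (te m n).2) ∧ (¬ Even n → (te m n).2 ≤ (te m n).1) := by
  have hkey : ∀ t : ℕ, (m-1) * t = t + (m-2) * t := by intro t; cases m with
    | zero => omega
    | succ m => cases m with
      | zero => omega
      | succ m => rw [show m+1+1-1 = m+1 from rfl, show m+1+1-2 = m from rfl, Nat.succ_mul]; omega
  induction n with
  | zero => simp [te]
  | succ n ih =>
    rw [Nat.even_add_one]
    constructor
    · intro h
      have := ih.2 h
      simp only [te]
      rw [hkey]; omega
    · intro h
      have := ih.1 (by tauto)
      simp only [te]
      rw [hkey]; omega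

end DPProof

namespace DPProof

variable {m : ℕ}

/-- Number of walks `c_0, …, c_n` with `c_0 = a`, `c_{i+1} ≠ σ i (c_i)`, `c_n ∈ S`. -/
noncomputable def pcount (σ : ℕ → Equiv.Perm (Fin m)) (n : ℕ) (a : Fin m)
    (S : Finset (Fin m)) : ℕ := by
  classical
  exact (Finset.univ.filter (fun c : Fin (n+1) → Fin m =>
    c 0 = a ∧ (∀ i : Fin n, c i.succ ≠ σ i (c i.castSucc)) ∧ c (Fin.last n) ∈ S)).card

def comp (σ : ℕ → Equiv.Perm (Fin m)) : ℕ → Equiv.Perm (Fin m)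
  | 0 => 1
  | n+1 => σ n * comp σ n

lemma pcount_zero (σ : ℕ → Equiv.Perm (Fin m)) (a : Fin m) (S : Finset (Fin m)) :
    pcount σ 0 a S = if a ∈ S then 1 else 0 := by
  classical
  unfold pcount
  by_cases h : a ∈ S
  · rw [if_pos h]
    rw [show (Finset.univ.filter (fun c : Fin 1 → Fin m =>
      c 0 = a ∧ (∀ i : Fin 0, c i.succ ≠ σ i (c i.castSucc)) ∧ c (Fin.last 0) ∈ S))
      = {fun _ => a} from ?_]
    · simp
    · ext c
      simp only [mem_filter, mem_univ, true_and, mem_singleton]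
      constructor
      · rintro ⟨h0, -, -⟩
        funext i
        rw [Subsingleton.elim i 0, h0]
      · rintro rfl
        exact ⟨rfl, fun i => i.elim0, by simpa [Fin.last] using h⟩
  · rw [if_neg h]
    rw [Finset.card_eq_zero]
    ext c
    simp only [mem_filter, mem_univ, true_and, Finset.notMem_empty, iff_false, not_and]
    intro h0 _ hc
    exact h (by rw [← h0, Subsingleton.elim (0 : Fin 1) (Fin.last 0)]; exact hc)

lemma pcount_split (σ : ℕ → Equiv.Perm (Fin m)) (n : ℕ) (a : Fin m) (S : Finset (Fin m)) :
    pcount σ n a S = ∑ x ∈ S, pcount σ n a {x} := by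
  classical
  unfold pcount
  rw [← Finset.card_biUnion]
  · congr 1
    ext c
    simp only [mem_filter, mem_univ, true_and, Finset.mem_biUnion, mem_singleton]
    constructor
    · rintro ⟨h0, hs, hl⟩
      exact ⟨c (Fin.last n), hl, h0, hs, rfl⟩
    · rintro ⟨x, hx, h0, hs, hl⟩
      exact ⟨h0, hs, hl ▸ hx⟩
  · intro x _ y _ hxy
    simp only [Finset.disjoint_left, mem_filter, mem_univ, true_and, mem_singleton]
    rintro c ⟨-, -, h1⟩ ⟨-, -, h2⟩
    exact hxy (h1 ▸ h2 ▸ rfl)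

lemma pcount_peel (σ : ℕ → Equiv.Perm (Fin m)) (n : ℕ) (a b : Fin m) :
    pcount σ (n+1) a {b}
      = pcount σ n a (Finset.univ.filter fun x => σ n x ≠ b) := by
  classical
  unfold pcount
  apply Finset.card_bij (fun c _ => Fin.init c)
  · intro c hc
    simp only [mem_filter, mem_univ, true_and, mem_singleton] at hc ⊢
    obtain ⟨h0, hstep, hlast⟩ := hc
    refine ⟨by simpa [Fin.init] using h0, ?_, ?_⟩
    · intro i
      have h := hstep i.castSucc
      simp only [Fin.init, ← Fin.succ_castSucc]; exact h
    · have h := hstep (Fin.last n)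
      rw [Fin.succ_last, hlast] at h
      have h2 : (σ n) (c (Fin.last n).castSucc) ≠ b := by
        simpa [Fin.val_last] using Ne.symm h
      simp [Fin.init, h2]
  · intro c1 h1 c2 h2 hinit
    simp only [mem_filter, mem_univ, true_and, mem_singleton] at h1 h2
    calc c1 = Fin.snoc (Fin.init c1) b := by rw [← h1.2.2, Fin.snoc_init_self]
      _ = Fin.snoc (Fin.init c2) b := by rw [hinit]
      _ = c2 := by rw [← h2.2.2, Fin.snoc_init_self]
  · intro d hd
    simp only [mem_filter, mem_univ, true_and] at hd
    obtain ⟨h0, hstep, hlast⟩ := hd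
    refine ⟨Fin.snoc d b, ?_, by simp⟩
    simp only [mem_filter, mem_univ, true_and, mem_singleton]
    refine ⟨?_, ?_, ?_⟩
    · rw [show (0 : Fin (n+2)) = Fin.castSucc 0 by simp, Fin.snoc_castSucc]
      exact h0
    · intro i
      induction i using Fin.lastCases with
      | last =>
        rw [Fin.succ_last, Fin.snoc_last, Fin.snoc_castSucc]
        simpa [Fin.val_last] using Ne.symm hlast
      | cast j =>
        rw [Fin.succ_castSucc, Fin.snoc_castSucc, Fin.snoc_castSucc]
        simpa using hstep j
    · rw [Fin.snoc_last]

end DPProof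

namespace DPProof

lemma pcount_exact {m : ℕ} (hm : 2 ≤ m) (σ : ℕ → Equiv.Perm (Fin m)) :
    ∀ (n : ℕ) (a b : Fin m),
      pcount σ n a {b} = if b = comp σ n a then (te m n).2 else (te m n).1 := by
  classical
  intro n
  induction n with
  | zero =>
    intro a b
    rw [pcount_zero]
    show _ = if b = (1 : Equiv.Perm (Fin m)) a then (te m 0).2 else (te m 0).1
    simp only [Finset.mem_singleton, te, Equiv.Perm.one_apply]
    by_cases h : a = b
    · subst h; simp
    · rw [if_neg h]; exact (if_neg (fun hh : b = a => h hh.symm)).symm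
  | succ n ih =>
    intro a b
    rw [pcount_peel, pcount_split]
    have hT : (Finset.univ.filter fun x => σ n x ≠ b) = {(σ n).symm b}ᶜ := by
      ext x
      simp [Finset.mem_compl, ne_eq, ← Equiv.eq_symm_apply]
    rw [hT]
    have hcardT : ({(σ n).symm b}ᶜ : Finset (Fin m)).card = m - 1 := by
      rw [Finset.card_compl]
      simp
    have hsum : ∀ x ∈ ({(σ n).symm b}ᶜ : Finset (Fin m)), pcount σ n a {x}
        = if x = comp σ n a then (te m n).2 else (te m n).1 := fun x _ => ih a x
    rw [Finset.sum_congr rfl hsum]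
    by_cases hb : b = comp σ (n+1) a
    · rw [if_pos hb]
      have hnot : comp σ n a ∉ ({(σ n).symm b}ᶜ : Finset (Fin m)) := by
        simp only [Finset.mem_compl, Finset.mem_singleton, not_not]
        rw [hb, Equiv.eq_symm_apply]
        simp [comp]
      rw [Finset.sum_congr rfl (fun x hx => if_neg (fun he : x = comp σ n a => hnot (he ▸ hx)))]
      rw [Finset.sum_const, smul_eq_mul, hcardT]
      simp [te]
    · rw [if_neg hb]
      have hmem : comp σ n a ∈ ({(σ n).symm b}ᶜ : Finset (Fin m)) := by
        simp only [Finset.mem_compl, Finset.mem_singleton]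
        intro he
        exact hb (by simp [comp, he])
      rw [← Finset.add_sum_erase _ _ hmem, if_pos rfl]
      have : ∀ x ∈ (({(σ n).symm b}ᶜ : Finset (Fin m)).erase (comp σ n a)),
          (if x = comp σ n a then (te m n).2 else (te m n).1) = (te m n).1 := by
        intro x hx
        exact if_neg (Finset.ne_of_mem_erase hx)
      rw [Finset.sum_congr rfl this, Finset.sum_const, smul_eq_mul,
        Finset.card_erase_of_mem hmem, hcardT, show m - 1 - 1 = m - 2 by omega]
      simp [te]

lemma pcount_ge {m : ℕ} (hm : 2 ≤ m) (σ : ℕ → Equiv.Perm (Fin m)) (n : ℕ)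
    (hn : Even n) (a b : Fin m) : (te m n).1 ≤ pcount σ n a {b} := by
  rw [pcount_exact hm σ n a b]
  split
  · exact (te_parity hm n).1 hn
  · exact le_refl _

end DPProof

namespace DPProof

/-- The canonical (diagonal) cover of a graph. -/
def canonCover {V : Type} (G : SimpleGraph V) (m : ℕ) : DPCover G m where
  H := { Adj := fun p q => (p.1 = q.1 ∧ p.2 ≠ q.2) ∨ (G.Adj p.1 q.1 ∧ p.2 = q.2)
         symm := ⟨by
           rintro ⟨x,i⟩ ⟨y,j⟩ (⟨h1,h2⟩|⟨h1,h2⟩)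
           · exact Or.inl ⟨h1.symm, h2.symm⟩
           · exact Or.inr ⟨h1.symm, h2.symm⟩⟩
         loopless := ⟨by rintro ⟨x,i⟩ (⟨-,h⟩|⟨h,-⟩) <;> simp_all⟩ }
  part_complete := fun v a b h => Or.inl ⟨rfl, h⟩
  cross := by rintro u v a b huv (⟨h,-⟩|⟨h,-⟩) <;> tauto
  matching_right := by
    rintro u v a b b' huv (⟨h,-⟩|⟨-,h⟩) (⟨h',-⟩|⟨-,h'⟩) <;> first
      | exact absurd h huv | exact absurd h' huv | (simp only [] at h h'; omega) | exact h.symm.trans h'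
  matching_left := by
    rintro u v a a' b huv (⟨h,-⟩|⟨-,h⟩) (⟨h',-⟩|⟨-,h'⟩) <;> first
      | exact absurd h huv | exact absurd h' huv | exact h.trans h'.symm

lemma dpCount_canonCover {V : Type} (G : SimpleGraph V) (m : ℕ) :
    dpCount (canonCover G m) = properCount G m := by
  apply Nat.card_congr
  apply Equiv.subtypeEquivRight
  intro c
  constructor
  · exact fun h u v hadj heq => h u v (Or.inr ⟨hadj, heq⟩)
  · intro h u v
    rintro (⟨rfl, hne⟩ | ⟨hadj, heq⟩)
    · exact hne rfl
    · exact h u v hadj heq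

lemma PDP_le_properCount {V : Type} (G : SimpleGraph V) (m : ℕ) :
    PDP G m ≤ properCount G m :=
  Nat.sInf_le ⟨canonCover G m, dpCount_canonCover G m⟩

end DPProof

namespace DPProof

lemma wrap_adj {n : ℕ} : (cycleGraph (n+2)).Adj (Fin.last (n+1)) 0 := by
  rw [cycleGraph_adj]
  right
  rw [zero_sub, Fin.neg_last]

lemma consec_adj {n : ℕ} (i : Fin (n+1)) :
    (cycleGraph (n+2)).Adj i.succ i.castSucc := by
  rw [cycleGraph_adj]
  left
  rw [← Fin.coeSucc_eq_succ, add_sub_cancel_left]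

open Fin.CommRing in
lemma proper_cycle_iff {m n : ℕ} (c : Fin (n+2) → Fin m) :
    (∀ u v, (cycleGraph (n+2)).Adj u v → c u ≠ c v) ↔
      ((∀ i : Fin (n+1), c i.succ ≠ c i.castSucc) ∧ c (Fin.last (n+1)) ≠ c 0) := by
  constructor
  · intro h
    exact ⟨fun i => h _ _ (consec_adj i), h _ _ wrap_adj⟩
  · rintro ⟨hs, hw⟩
    have key : ∀ x y : Fin (n+2), y = x + 1 → c x ≠ c y := by
      intro x y hy
      by_cases hx : x = Fin.last (n+1)
      · subst hx
        rw [hy, Fin.last_add_one]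
        exact hw
      · have hlt : (x : ℕ) < n + 1 := by
          rcases Fin.lt_or_eq_of_le (Fin.le_last x) with h' | h'
          · exact h'
          · exact absurd h' hx
        set i : Fin (n+1) := ⟨x, hlt⟩ with hi
        have hx2 : x = i.castSucc := by simp [hi, Fin.ext_iff]
        have hy2 : y = i.succ := by rw [hy, hx2, Fin.coeSucc_eq_succ]
        rw [hx2, hy2]
        exact (hs i).symm
    intro u v hadj
    rw [cycleGraph_adj] at hadj
    rcases hadj with h | h
    · exact (key v u (by rw [← h]; ring)).symm
    · exact key u v (by rw [← h]; ring)

end DPProof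

namespace DPProof

lemma comp_one {m : ℕ} : ∀ n, comp (fun _ => (1 : Equiv.Perm (Fin m))) n = 1
  | 0 => rfl
  | n+1 => by rw [comp, comp_one n, one_mul]

lemma natCard_subtype {α : Type} [Fintype α] (P : α → Prop) [DecidablePred P] :
    Nat.card {x // P x} = (Finset.univ.filter P).card := by
  rw [Nat.card_eq_fintype_card, Fintype.card_subtype]

lemma filter_card_congr {α : Type} [Fintype α] {p q : α → Prop} [DecidablePred p]
    [DecidablePred q] (h : ∀ x, p x ↔ q x) :
    (Finset.univ.filter p).card = (Finset.univ.filter q).card := by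
  congr 1
  ext x
  simp [h x]

lemma mul_sub_one' (m : ℕ) : m * (m - 1) = m * m - m := by
  cases m with
  | zero => rfl
  | succ m' => rw [Nat.succ_sub_one, Nat.mul_succ, Nat.add_sub_cancel]

lemma properCount_cycle {m n : ℕ} (hm : 2 ≤ m) :
    properCount (cycleGraph (n+2)) m = m * (m - 1) * (te m (n+1)).1 := by
  classical
  unfold properCount
  rw [natCard_subtype]
  rw [filter_card_congr (fun c : Fin (n+2) → Fin m => proper_cycle_iff c)]
  have h2 : (Finset.univ.filter (fun c : Fin (n+2) → Fin m =>
        (∀ i : Fin (n+1), c i.succ ≠ c i.castSucc) ∧ c (Fin.last (n+1)) ≠ c 0))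
      = (Finset.univ.offDiag : Finset (Fin m × Fin m)).biUnion (fun p =>
          Finset.univ.filter (fun c : Fin (n+2) → Fin m =>
            c 0 = p.1 ∧ (∀ i : Fin (n+1),
              c i.succ ≠ (fun _ => (1 : Equiv.Perm (Fin m))) (i : ℕ) (c i.castSucc)) ∧
            c (Fin.last (n+1)) ∈ ({p.2} : Finset (Fin m)))) := by
    ext c
    simp only [mem_filter, mem_univ, true_and, Finset.mem_biUnion, Finset.mem_offDiag,
      Finset.mem_singleton, Equiv.Perm.one_apply]
    constructor
    · rintro ⟨hs, hw⟩
      exact ⟨(c 0, c (Fin.last (n+1))), fun h => hw h.symm, rfl, hs, rfl⟩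
    · rintro ⟨p, hne, h0, hs, hl⟩
      exact ⟨hs, fun h => hne (by rw [← h0, ← hl, h])⟩
  rw [h2, Finset.card_biUnion]
  · have h3 : ∀ p ∈ (Finset.univ.offDiag : Finset (Fin m × Fin m)),
        (Finset.univ.filter (fun c : Fin (n+2) → Fin m =>
            c 0 = p.1 ∧ (∀ i : Fin (n+1),
              c i.succ ≠ (fun _ => (1 : Equiv.Perm (Fin m))) (i : ℕ) (c i.castSucc)) ∧
            c (Fin.last (n+1)) ∈ ({p.2} : Finset (Fin m)))).card = (te m (n+1)).1 := by
      intro p hp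
      have hpc : (Finset.univ.filter (fun c : Fin (n+2) → Fin m =>
            c 0 = p.1 ∧ (∀ i : Fin (n+1),
              c i.succ ≠ (fun _ => (1 : Equiv.Perm (Fin m))) (i : ℕ) (c i.castSucc)) ∧
            c (Fin.last (n+1)) ∈ ({p.2} : Finset (Fin m)))).card
          = pcount (fun _ => (1 : Equiv.Perm (Fin m))) (n+1) p.1 {p.2} := by
        unfold pcount
        exact filter_card_congr (fun c => Iff.rfl)
      rw [hpc, pcount_exact hm, comp_one]
      simp only [Finset.mem_offDiag] at hp
      rw [if_neg (by simpa using Ne.symm hp.2.2)]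
    rw [Finset.sum_congr rfl h3, Finset.sum_const, smul_eq_mul, Finset.offDiag_card]
    simp only [Finset.card_univ, Fintype.card_fin]
    rw [mul_sub_one']
  · intro p hp q hq hpq
    simp only [Finset.disjoint_left, mem_filter, mem_univ, true_and, Finset.mem_singleton]
    rintro c ⟨h0, -, hl⟩ ⟨h0', -, hl'⟩
    exact hpq (Prod.ext (h0 ▸ h0' ▸ rfl) (hl ▸ hl' ▸ rfl))

end DPProof

namespace DPProof

lemma exists_ext {V : Type} {G : SimpleGraph V} {m : ℕ} (C : DPCover G m)
    (w z : V) (hwz : w ≠ z) :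
    ∃ π : Equiv.Perm (Fin m), ∀ x y, C.H.Adj (w, x) (z, y) → π x = y := by
  classical
  let p : Fin m → Prop := fun x => ∃ y, C.H.Adj (w, x) (z, y)
  let q : Fin m → Prop := fun y => ∃ x, C.H.Adj (w, x) (z, y)
  let e : {x // p x} ≃ {y // q y} :=
    { toFun := fun x => ⟨Classical.choose x.2, ⟨x.1, Classical.choose_spec x.2⟩⟩
      invFun := fun y => ⟨Classical.choose y.2, ⟨y.1, Classical.choose_spec y.2⟩⟩
      left_inv := by
        rintro ⟨x, hx⟩
        apply Subtype.ext
        exact C.matching_left w z _ x _ hwz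
          (Classical.choose_spec (⟨x, Classical.choose_spec hx⟩ : q (Classical.choose hx)))
          (Classical.choose_spec hx)
      right_inv := by
        rintro ⟨y, hy⟩
        apply Subtype.ext
        exact C.matching_right w z _ _ y hwz
          (Classical.choose_spec (⟨y, Classical.choose_spec hy⟩ : p (Classical.choose hy)))
          (Classical.choose_spec hy) }
  refine ⟨e.extendSubtype, ?_⟩
  intro x y hadj
  have hx : p x := ⟨y, hadj⟩
  rw [Equiv.extendSubtype_apply_of_mem e x hx]
  exact C.matching_right w z x _ y hwz (Classical.choose_spec hx) hadj

end DPProof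

namespace DPProof

open Fin.CommRing in
lemma NCount_ge {n m : ℕ} (hm : 2 ≤ m) (C : DPCover (cycleGraph (n+2)) m)
    (u v : Fin (n+2)) (huv : (cycleGraph (n+2)).Adj u v) (a b : Fin m)
    (hnadj : ¬ C.H.Adj (u, a) (v, b)) (hpar : Even (n+1)) :
    (te m (n+1)).1 ≤ NCount C ({(u, a), (v, b)} : Set (Fin (n+2) × Fin m)) := by
  classical
  have hdir := cycleGraph_adj.mp huv
  set ε : Fin (n+2) := if v - u = 1 then -1 else 1 with hε
  have hεsq : ε * ε = 1 := by rw [hε]; split <;> ring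
  have hlneg : (Fin.last (n+1) : Fin (n+2)) = -1 := by
    rw [← neg_neg (Fin.last (n+1)), Fin.neg_last]
  set q : Fin (n+2) → Fin (n+2) := fun i => u + ε * i with hqdef
  have hq0 : q 0 = u := by simp [hqdef]
  have hqv : q (Fin.last (n+1)) = v := by
    rw [hqdef]
    simp only []
    rw [hlneg, hε]
    split
    · rename_i h1
      have : v = u + 1 := by rw [← h1]; ring
      rw [this]; ring
    · rename_i h1
      have h : u - v = 1 := by tauto
      have : v = u - 1 := by rw [← h]; ring
      rw [this]; ring
  have hinj : Function.Injective q := by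
    intro i j h
    have h2 : ε * i = ε * j := by
      have := h
      simp only [hqdef] at this
      exact add_left_cancel this
    calc i = (ε * ε) * i := by rw [hεsq, one_mul]
      _ = ε * (ε * j) := by rw [mul_assoc, h2]
      _ = (ε * ε) * j := by rw [mul_assoc]
      _ = j := by rw [hεsq, one_mul]
  set e : Fin (n+2) ≃ Fin (n+2) :=
    Equiv.ofBijective q (Finite.injective_iff_bijective.mp hinj) with hedef
  have heq : ∀ i, e i = q i := fun i => rfl
  have hsymmq : ∀ i, e.symm (q i) = i := by
    intro i
    rw [← heq, Equiv.symm_apply_apply]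
  have hqadj : ∀ i j : Fin (n+2), (cycleGraph (n+2)).Adj (q i) (q j) →
      j = i + 1 ∨ i = j + 1 := by
    have hkey : ∀ i j : Fin (n+2), q i - q j = 1 → i - j = ε := by
      intro i j h
      have hsub : q i - q j = ε * (i - j) := by rw [hqdef]; ring
      calc i - j = (ε * ε) * (i - j) := by rw [hεsq, one_mul]
        _ = ε * (q i - q j) := by rw [mul_assoc, ← hsub]
        _ = ε := by rw [h, mul_one]
    intro i j hadj
    rw [cycleGraph_adj] at hadj
    have hcases : i - j = ε ∨ j - i = ε := by
      rcases hadj with h | h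
      · exact Or.inl (hkey i j h)
      · exact Or.inr (hkey j i h)
    rw [hε] at hcases
    split at hcases
    · rcases hcases with h | h
      · left; have : i = j + (-1) := by rw [← h]; ring
        rw [this]; ring
      · right; have : j = i + (-1) := by rw [← h]; ring
        rw [this]; ring
    · rcases hcases with h | h
      · right; have : i = j + 1 := by rw [← h]; ring
        exact this
      · left; have : j = i + 1 := by rw [← h]; ring
        exact this
  have hqconsec_ne : ∀ i' : Fin (n+1), q i'.castSucc ≠ q i'.succ := by
    intro i' h
    exact (Fin.castSucc_lt_succ (i := i')).ne (hinj h)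
  choose exts hexts using fun i' : Fin (n+1) =>
    exists_ext C (q i'.castSucc) (q i'.succ) (hqconsec_ne i')
  set σ : ℕ → Equiv.Perm (Fin m) := fun x => if h : x < n+1 then exts ⟨x, h⟩ else 1 with hσ
  have hσi : ∀ i' : Fin (n+1), σ (i' : ℕ) = exts i' := by
    intro i'
    rw [hσ]
    simp only [i'.isLt, dif_pos, Fin.eta]
  -- the path-coloring subtype
  have hcard : pcount σ (n+1) a {b} = Nat.card {c : Fin (n+2) → Fin m //
      c 0 = a ∧ (∀ i : Fin (n+1), c i.succ ≠ σ (i : ℕ) (c i.castSucc)) ∧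
      c (Fin.last (n+1)) ∈ ({b} : Finset (Fin m))} := by
    rw [natCard_subtype]
    unfold pcount
    exact filter_card_congr (fun c => Iff.rfl)
  -- key: each path coloring gives an H-coloring containing P
  have key : ∀ d : Fin (n+2) → Fin m, d 0 = a →
      (∀ i : Fin (n+1), d i.succ ≠ σ (i : ℕ) (d i.castSucc)) →
      d (Fin.last (n+1)) = b →
      C.IsColoring (fun x => d (e.symm x)) ∧
        ∀ p ∈ ({(u, a), (v, b)} : Set (Fin (n+2) × Fin m)),
          (fun x => d (e.symm x)) p.1 = p.2 := by
    intro d hd0 hds hdl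
    have hce : ∀ i, d (e.symm (q i)) = d i := fun i => by rw [hsymmq]
    have key2 : ∀ i j : Fin (n+2), j = i + 1 → ¬ C.H.Adj (q i, d i) (q j, d j) := by
      intro i j hj hadj
      by_cases hi : i = Fin.last (n+1)
      · subst hi
        rw [hj, Fin.last_add_one] at hadj
        rw [hqv, hq0, hdl, hd0] at hadj
        exact hnadj hadj.symm
      · have hlt : (i : ℕ) < n + 1 := by
          rcases Fin.lt_or_eq_of_le (Fin.le_last i) with h' | h'
          · exact h'
          · exact absurd h' hi
        set i' : Fin (n+1) := ⟨i, hlt⟩ with hi'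
        have hcast : i = i'.castSucc := by simp [hi', Fin.ext_iff]
        have hsucc : j = i'.succ := by rw [hj, hcast, Fin.coeSucc_eq_succ]
        rw [hcast, hsucc] at hadj
        exact hds i' (by rw [hσi i']; exact (hexts i' _ _ hadj).symm)
    constructor
    · intro x y hadj
      dsimp only at hadj
      by_cases hxy : x = y
      · subst hxy
        exact C.H.loopless.irrefl _ hadj
      · have hGadj := C.cross x y _ _ hxy hadj
        have hx : x = q (e.symm x) := by rw [← heq, Equiv.apply_symm_apply]
        have hy : y = q (e.symm y) := by rw [← heq, Equiv.apply_symm_apply]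
        rw [hx, hy] at hGadj
        have hadj2 : C.H.Adj (q (e.symm x), d (e.symm x)) (q (e.symm y), d (e.symm y)) := by
          rw [← hx, ← hy]; exact hadj
        rcases hqadj _ _ hGadj with hj | hj
        · exact key2 _ _ hj hadj2
        · exact key2 _ _ hj hadj2.symm
    · rintro p (rfl | rfl)
      · show d (e.symm u) = a
        rw [← hq0, hce, hd0]
      · show d (e.symm v) = b
        rw [← hqv, hce, hdl]
  -- assemble
  have hle : Nat.card {c : Fin (n+2) → Fin m //
      c 0 = a ∧ (∀ i : Fin (n+1), c i.succ ≠ σ (i : ℕ) (c i.castSucc)) ∧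
      c (Fin.last (n+1)) ∈ ({b} : Finset (Fin m))}
      ≤ NCount C ({(u, a), (v, b)} : Set (Fin (n+2) × Fin m)) := by
    unfold NCount
    apply Nat.card_le_card_of_injective
      (fun d => ⟨fun x => d.1 (e.symm x),
        key d.1 d.2.1 d.2.2.1 (Finset.mem_singleton.mp d.2.2.2)⟩)
    intro d1 d2 hdd
    apply Subtype.ext
    funext i
    have h2 := congrArg (fun z => z.1 (e i)) hdd
    dsimp only at h2
    rwa [heq, hsymmq] at h2
  calc (te m (n+1)).1 ≤ pcount σ (n+1) a {b} := pcount_ge hm σ (n+1) hpar a b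
    _ = _ := hcard
    _ ≤ _ := hle

end DPProof

theorem oddCycle_NCount_ge {k m : ℕ} (hk : 1 ≤ k) (hm : 2 ≤ m)
    (C : DPCover (SimpleGraph.cycleGraph (2 * k + 1)) m)
    (u v : Fin (2 * k + 1)) (huv : (SimpleGraph.cycleGraph (2 * k + 1)).Adj u v)
    (a b : Fin m) (hnadj : ¬ C.H.Adj (u, a) (v, b)) :
    PDP (SimpleGraph.cycleGraph (2 * k + 1)) m ≤
      NCount C ({(u, a), (v, b)} : Set (Fin (2 * k + 1) × Fin m)) * (m * (m - 1)) := by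
  obtain ⟨k', rfl⟩ : ∃ k', k = k' + 1 := ⟨k - 1, by omega⟩
  have h1 : PDP (SimpleGraph.cycleGraph ((2 * k' + 1) + 2)) m
      ≤ m * (m - 1) * (DPProof.te m (2 * k' + 1 + 1)).1 :=
    (DPProof.PDP_le_properCount _ m).trans_eq (DPProof.properCount_cycle hm)
  have hev : Even ((2 * k' + 1) + 1) := ⟨k' + 1, by omega⟩
  have h2 : (DPProof.te m (2 * k' + 1 + 1)).1
      ≤ NCount C ({(u, a), (v, b)} : Set (Fin ((2 * k' + 1) + 2) × Fin m)) :=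
    DPProof.NCount_ge hm C u v huv a b hnadj hev
  calc PDP (SimpleGraph.cycleGraph ((2 * k' + 1) + 2)) m
      ≤ m * (m - 1) * (DPProof.te m (2 * k' + 1 + 1)).1 := h1
    _ = (DPProof.te m (2 * k' + 1 + 1)).1 * (m * (m - 1)) := by ring
    _ ≤ NCount C ({(u, a), (v, b)} : Set (Fin ((2 * k' + 1) + 2) × Fin m)) * (m * (m - 1)) :=
        mul_le_mul_left h2 _
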